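/- Let Λ be an artin algebra. Suppose (f, g), with f : A → C and g : B → D, is a morphism in the morphism category from an object (a : A → B) to an object (c : C → D), where the inclusion a₂ : Im(a) → B is an injective envelope. Let h : Im(a) → Im(c) be the induced map on images. If the pair (f, h) : (A → Im a) → (C → Im c) is a split monomorphism in the morphism category (i.e. has a left inverse), then (f, g) is a split monomorphism. -/

import Mathlib

universe u

/-- A linear map factors through an injective `Λ`-module. -/
def FactorsThroughInjective (Λ : Type u) [Ring Λ] {A B : Type u}
    [AddCommGroup A] [Module Λ A] [AddCommGroup B] [Module Λ B]
    (h : A →ₗ[Λ] B) : Prop :=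
  ∃ (I : Type u) (_ : AddCommGroup I) (_ : Module Λ I),
    Module.Injective Λ I ∧ ∃ (p : A →ₗ[Λ] I) (q : I →ₗ[Λ] B), h = q ∘ₗ p

/-- `e : M →ₗ[Λ] I` is an injective envelope: `I` is injective, `e` is injective,
and the image of `e` is an essential submodule of `I`. -/
def IsInjectiveEnvelope (Λ : Type u) [Ring Λ] {M I : Type u}
    [AddCommGroup M] [Module Λ M] [AddCommGroup I] [Module Λ I]
    (e : M →ₗ[Λ] I) : Prop :=
  Module.Injective Λ I ∧ Function.Injective e ∧
    ∀ N : Submodule Λ I, N ≠ ⊥ → N ⊓ LinearMap.range e ≠ ⊥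

/-- let `(f, g) : (a : A → B) → (c : C → D)` be a morphism in the morphism
category such that the inclusion `Im a → B` is an injective envelope (`B` injective with
essential image of `a`), and let `h : Im a → Im c` be the induced map on images. If
`(f, h) : (A → Im a) → (C → Im c)` is a split monomorphism, then so is `(f, g)`. -/
theorem stmt15
    (k : Type u) [CommRing k] [IsArtinianRing k]
    (Λ : Type u) [Ring Λ] [Algebra k Λ] [Module.Finite k Λ]
    (A B C D : Type u)
    [AddCommGroup A] [Module Λ A] [Module.Finite Λ A]
    [AddCommGroup B] [Module Λ B] [Module.Finite Λ B]
    [AddCommGroup C] [Module Λ C] [Module.Finite Λ C]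
    [AddCommGroup D] [Module Λ D] [Module.Finite Λ D]
    (a : A →ₗ[Λ] B) (c : C →ₗ[Λ] D)
    (f : A →ₗ[Λ] C) (g : B →ₗ[Λ] D)
    (hsq : c ∘ₗ f = g ∘ₗ a)
    -- the inclusion Im a → B is an injective envelope:
    (hBinj : Module.Injective Λ B)
    (hess : ∀ N : Submodule Λ B, N ≠ ⊥ → N ⊓ LinearMap.range a ≠ ⊥)
    -- h : Im a → Im c is the induced map on images:
    (h : ↥(LinearMap.range a) →ₗ[Λ] ↥(LinearMap.range c))
    (hh₁ : h ∘ₗ a.rangeRestrict = c.rangeRestrict ∘ₗ f)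
    (hh₂ : (LinearMap.range c).subtype ∘ₗ h = g ∘ₗ (LinearMap.range a).subtype)
    -- (f, h) is a split monomorphism in the morphism category:
    (hsplit : ∃ (u : C →ₗ[Λ] A) (w : ↥(LinearMap.range c) →ₗ[Λ] ↥(LinearMap.range a)),
      a.rangeRestrict ∘ₗ u = w ∘ₗ c.rangeRestrict ∧
      u ∘ₗ f = LinearMap.id ∧ w ∘ₗ h = LinearMap.id) :
    -- then (f, g) is a split monomorphism:
    ∃ (u' : C →ₗ[Λ] A) (v' : D →ₗ[Λ] B),
      a ∘ₗ u' = v' ∘ₗ c ∧ u' ∘ₗ f = LinearMap.id ∧ v' ∘ₗ g = LinearMap.id := by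

  obtain ⟨u, w, hw₁, huf, hwh⟩ := hsplit
  -- extend ι ∘ w : range c → B along the inclusion range c ↪ D using injectivity of B
  obtain ⟨v, hv⟩ := hBinj.out (LinearMap.range c).subtype (Submodule.injective_subtype _)
    ((LinearMap.range a).subtype ∘ₗ w)
  -- key square: a ∘ u = v ∘ c
  have hvc : a ∘ₗ u = v ∘ₗ c := by
    ext x
    have h1 : a (u x) = (LinearMap.range a).subtype (a.rangeRestrict (u x)) := rfl
    have h2 : a.rangeRestrict (u x) = w (c.rangeRestrict x) := by
      have := congrArg (fun m => m x) hw₁; exact this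
    simp only [LinearMap.coe_comp, Function.comp_apply]
    rw [h1, h2]
    have := hv (c.rangeRestrict x)
    simpa using this.symm
  -- e := v ∘ g is the identity on range a
  set e : B →ₗ[Λ] B := v ∘ₗ g with he
  have hefix : ∀ x : ↥(LinearMap.range a), e ((LinearMap.range a).subtype x) =
      (LinearMap.range a).subtype x := by
    intro x
    have h2 : g ((LinearMap.range a).subtype x) = (LinearMap.range c).subtype (h x) := by
      have := congrArg (fun m => m x) hh₂; simpa using this.symm
    have h3 : v ((LinearMap.range c).subtype (h x)) = (LinearMap.range a).subtype (w (h x)) := by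
      simpa using hv (h x)
    have h4 : w (h x) = x := by
      have := congrArg (fun m => m x) hwh; simpa using this
    simp only [he, LinearMap.coe_comp, Function.comp_apply]
    rw [h2, h3, h4]
  -- e is injective by essentiality
  have hker : LinearMap.ker e = ⊥ := by
    by_contra hne
    apply hess _ hne
    apply (Submodule.eq_bot_iff _).2
    rintro x ⟨hxk, hxr⟩
    have hx0 : e x = 0 := hxk
    have := hefix ⟨x, hxr⟩
    simp only [Submodule.coe_subtype] at this
    rw [hx0] at this
    exact this.symm
  have heinj : Function.Injective e := LinearMap.ker_eq_bot.1 hker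
  -- B is an artinian Λ-module
  letI : Module k B := Module.compHom B (algebraMap k Λ)
  haveI : IsScalarTower k Λ B :=
    ⟨fun x y z => by rw [Algebra.smul_def, mul_smul]; rfl⟩
  haveI : Module.Finite k B := Module.Finite.trans Λ B
  haveI : IsArtinianRing k := inferInstance
  haveI : IsArtinian k B := isArtinian_of_fg_of_artinian'
  haveI : IsArtinian Λ B := isArtinian_of_tower k inferInstance
  have hesurj : Function.Surjective e :=
    IsArtinian.surjective_of_injective_endomorphism e heinj
  -- t is the inverse of e
  let E : B ≃ₗ[Λ] B := LinearEquiv.ofBijective e ⟨heinj, hesurj⟩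
  have hEa : ∀ x : B, x ∈ LinearMap.range a → E.symm x = x := by
    intro x hx
    apply heinj
    have h1 : e (E.symm x) = x := E.apply_symm_apply x
    rw [h1]
    exact (hefix ⟨x, hx⟩).symm
  refine ⟨u, E.symm.toLinearMap ∘ₗ v, ?_, huf, ?_⟩
  · ext x
    simp only [LinearMap.coe_comp, Function.comp_apply, LinearEquiv.coe_coe]
    have h1 : a (u x) = v (c x) := congrArg (fun m => m x) hvc
    rw [← h1, hEa (a (u x)) (LinearMap.mem_range_self a (u x))]
  · ext x
    simp only [LinearMap.coe_comp, Function.comp_apply, LinearEquiv.coe_coe, LinearMap.id_coe,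
      id_eq]
    have : v (g x) = e x := rfl
    rw [this]
    exact E.symm_apply_apply x
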